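/- Let s ∈ (1/2,1) and let θ₁, θ₂, θ₃ each satisfy 2(1+3s)/(1+s) < θᵢ < 2(1+s)/(1−s). Set γᵢ := (1+s)(θᵢ−2)/2, νᵢ := (1+s)(θᵢ−2)/(4s), and τ := max{ 2s/((θ₁−2)(1+s)), 2s/((θ₂−2)(1+s)), 2s/((θ₃−2)(1+s)) }. Suppose T > 0 and a₁, a₂, a₃ ≥ 0 satisfy s·T = γ₁a₁ + γ₂a₂ + γ₃a₃, and there are constants K₁, K₂, K₃ > 0 with aᵢ ≤ Kᵢ·T^{νᵢ} for i = 1,2,3. Then (1/2)·T − (a₁ + a₂ + a₃) ≥ (1/2 − τ) · min_{i=1,2,3} ( s/(3γᵢKᵢ) )^{1/(νᵢ−1)} > 0. -/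

import Mathlib

set_option maxHeartbeats 1000000

private lemma T_lower_bound (s γ K ν T : ℝ) (hs : 0 < s) (hγ : 0 < γ) (hK : 0 < K)
    (hT : 0 < T) (hν : 1 < ν) (h : s / 3 ≤ γ * K * T ^ (ν - 1)) :
    (s / (3 * γ * K)) ^ (1 / (ν - 1)) ≤ T := by
  have hν' : 0 < ν - 1 := by linarith
  have hbase : s / (3 * γ * K) ≤ T ^ (ν - 1) := by
    rw [div_le_iff₀ (by positivity)]
    nlinarith [h]
  have hmono : (s / (3 * γ * K)) ^ (1 / (ν - 1)) ≤ (T ^ (ν - 1)) ^ (1 / (ν - 1)) :=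
    Real.rpow_le_rpow (by positivity) hbase (by positivity)
  calc (s / (3 * γ * K)) ^ (1 / (ν - 1)) ≤ (T ^ (ν - 1)) ^ (1 / (ν - 1)) := hmono
    _ = T := by
        rw [← Real.rpow_mul hT.le, mul_one_div, div_self (ne_of_gt hν'), Real.rpow_one]


private lemma gamma_gt (s θ : ℝ) (h : 2 * (1 + 3*s) < θ * (1 + s)) :
    2 * s < (1 + s) * (θ - 2) / 2 := by nlinarith

private lemma theta_gt_two (s θ : ℝ) (hs0 : 0 < s) (hs2 : s < 1)
    (h : 2 * (1 + 3*s) < θ * (1 + s)) : 0 < θ - 2 := by nlinarith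

/-- Quantitative content of Corollary 3.8 (positivity of `C_{(a,b)}`):
under the Pohozaev relation `s·T = γ₁a₁ + γ₂a₂ + γ₃a₃` and the
Gagliardo–Nirenberg-type bounds `aᵢ ≤ Kᵢ·T^(νᵢ)`, the energy
`(1/2)·T − (a₁+a₂+a₃)` is bounded below by the positive constant
`(1/2 − τ)·min_i (s/(3γᵢKᵢ))^(1/(νᵢ−1))`. -/
theorem energy_positive_lower_bound_on_pohozaev
    (s θ₁ θ₂ θ₃ γ₁ γ₂ γ₃ ν₁ ν₂ ν₃ τ : ℝ)
    (hs : s ∈ Set.Ioo (1/2 : ℝ) 1)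
    (hθ₁ : 2 * (1 + 3*s) / (1 + s) < θ₁ ∧ θ₁ < 2 * (1 + s) / (1 - s))
    (hθ₂ : 2 * (1 + 3*s) / (1 + s) < θ₂ ∧ θ₂ < 2 * (1 + s) / (1 - s))
    (hθ₃ : 2 * (1 + 3*s) / (1 + s) < θ₃ ∧ θ₃ < 2 * (1 + s) / (1 - s))
    (hγ₁ : γ₁ = (1 + s) * (θ₁ - 2) / 2) (hγ₂ : γ₂ = (1 + s) * (θ₂ - 2) / 2)
    (hγ₃ : γ₃ = (1 + s) * (θ₃ - 2) / 2)
    (hν₁ : ν₁ = (1 + s) * (θ₁ - 2) / (4*s)) (hν₂ : ν₂ = (1 + s) * (θ₂ - 2) / (4*s))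
    (hν₃ : ν₃ = (1 + s) * (θ₃ - 2) / (4*s))
    (hτ : τ = max (max (2*s / ((θ₁ - 2) * (1 + s))) (2*s / ((θ₂ - 2) * (1 + s))))
            (2*s / ((θ₃ - 2) * (1 + s))))
    (T a₁ a₂ a₃ K₁ K₂ K₃ : ℝ)
    (hT : 0 < T) (ha₁ : 0 ≤ a₁) (ha₂ : 0 ≤ a₂) (ha₃ : 0 ≤ a₃)
    (hpoh : s * T = γ₁ * a₁ + γ₂ * a₂ + γ₃ * a₃)
    (hK₁ : 0 < K₁) (hK₂ : 0 < K₂) (hK₃ : 0 < K₃)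
    (hb₁ : a₁ ≤ K₁ * T ^ ν₁) (hb₂ : a₂ ≤ K₂ * T ^ ν₂) (hb₃ : a₃ ≤ K₃ * T ^ ν₃) :
    (1/2) * T - (a₁ + a₂ + a₃)
      ≥ (1/2 - τ) * min (min ((s / (3 * γ₁ * K₁)) ^ (1 / (ν₁ - 1)))
                             ((s / (3 * γ₂ * K₂)) ^ (1 / (ν₂ - 1))))
                        ((s / (3 * γ₃ * K₃)) ^ (1 / (ν₃ - 1)))
    ∧ 0 < (1/2 - τ) * min (min ((s / (3 * γ₁ * K₁)) ^ (1 / (ν₁ - 1)))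
                               ((s / (3 * γ₂ * K₂)) ^ (1 / (ν₂ - 1))))
                          ((s / (3 * γ₃ * K₃)) ^ (1 / (ν₃ - 1))) := by
  obtain ⟨hs1, hs2⟩ := hs
  have hs0 : (0:ℝ) < s := by linarith
  have h1s : (0:ℝ) < 1 + s := by linarith
  -- γᵢ > 2s
  have hl₁ := (div_lt_iff₀ h1s).mp hθ₁.1
  have hl₂ := (div_lt_iff₀ h1s).mp hθ₂.1
  have hl₃ := (div_lt_iff₀ h1s).mp hθ₃.1
  have hg₁ : 2 * s < γ₁ := hγ₁ ▸ gamma_gt s θ₁ hl₁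
  have hg₂ : 2 * s < γ₂ := hγ₂ ▸ gamma_gt s θ₂ hl₂
  have hg₃ : 2 * s < γ₃ := hγ₃ ▸ gamma_gt s θ₃ hl₃
  have hγ₁0 : 0 < γ₁ := by linarith
  have hγ₂0 : 0 < γ₂ := by linarith
  have hγ₃0 : 0 < γ₃ := by linarith
  have hθd₁ : 0 < θ₁ - 2 := theta_gt_two s θ₁ hs0 hs2 hl₁
  have hθd₂ : 0 < θ₂ - 2 := theta_gt_two s θ₂ hs0 hs2 hl₂
  have hθd₃ : 0 < θ₃ - 2 := theta_gt_two s θ₃ hs0 hs2 hl₃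
  -- the max terms equal s/γᵢ
  have he₁ : 2*s / ((θ₁ - 2) * (1 + s)) = s / γ₁ := by
    rw [hγ₁]; field_simp
  have he₂ : 2*s / ((θ₂ - 2) * (1 + s)) = s / γ₂ := by
    rw [hγ₂]; field_simp
  have he₃ : 2*s / ((θ₃ - 2) * (1 + s)) = s / γ₃ := by
    rw [hγ₃]; field_simp
  rw [he₁, he₂, he₃] at hτ
  have hτ₁ : s / γ₁ ≤ τ := hτ ▸ le_max_of_le_left (le_max_left _ _)
  have hτ₂ : s / γ₂ ≤ τ := hτ ▸ le_max_of_le_left (le_max_right _ _)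
  have hτ₃ : s / γ₃ ≤ τ := hτ ▸ le_max_right _ _
  have hτhalf : τ < 1/2 := by
    rw [hτ]
    have h1 : s / γ₁ < 1/2 := by rw [div_lt_iff₀ hγ₁0]; linarith
    have h2 : s / γ₂ < 1/2 := by rw [div_lt_iff₀ hγ₂0]; linarith
    have h3 : s / γ₃ < 1/2 := by rw [div_lt_iff₀ hγ₃0]; linarith
    exact max_lt (max_lt h1 h2) h3
  -- νᵢ > 1
  have hνγ₁ : ν₁ = γ₁ / (2*s) := by rw [hν₁, hγ₁]; field_simp; ring
  have hνγ₂ : ν₂ = γ₂ / (2*s) := by rw [hν₂, hγ₂]; field_simp; ring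
  have hνγ₃ : ν₃ = γ₃ / (2*s) := by rw [hν₃, hγ₃]; field_simp; ring
  have hν₁' : 1 < ν₁ := by rw [hνγ₁, lt_div_iff₀ (by positivity)]; linarith
  have hν₂' : 1 < ν₂ := by rw [hνγ₂, lt_div_iff₀ (by positivity)]; linarith
  have hν₃' : 1 < ν₃ := by rw [hνγ₃, lt_div_iff₀ (by positivity)]; linarith
  -- sum of a's bounded by τ T
  have hsum : a₁ + a₂ + a₃ ≤ τ * T := by
    have t₁ : s ≤ τ * γ₁ := by rw [div_le_iff₀ hγ₁0] at hτ₁; linarith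
    have t₂ : s ≤ τ * γ₂ := by rw [div_le_iff₀ hγ₂0] at hτ₂; linarith
    have t₃ : s ≤ τ * γ₃ := by rw [div_le_iff₀ hγ₃0] at hτ₃; linarith
    have u₁ : s * a₁ ≤ τ * (γ₁ * a₁) := by
      rw [← mul_assoc]; exact mul_le_mul_of_nonneg_right t₁ ha₁
    have u₂ : s * a₂ ≤ τ * (γ₂ * a₂) := by
      rw [← mul_assoc]; exact mul_le_mul_of_nonneg_right t₂ ha₂
    have u₃ : s * a₃ ≤ τ * (γ₃ * a₃) := by
      rw [← mul_assoc]; exact mul_le_mul_of_nonneg_right t₃ ha₃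
    have key : s * (a₁ + a₂ + a₃) ≤ s * (τ * T) := by
      have : s * (a₁ + a₂ + a₃) ≤ τ * (γ₁ * a₁ + γ₂ * a₂ + γ₃ * a₃) := by
        rw [mul_add, mul_add, mul_add, mul_add]
        exact add_le_add (add_le_add u₁ u₂) u₃
      rw [← hpoh] at this
      linarith [this]
    exact le_of_mul_le_mul_left key hs0
  -- lower bound on T
  have hpow₁ : T ^ (ν₁ - 1) = T ^ ν₁ / T := by
    rw [Real.rpow_sub hT, Real.rpow_one]
  have hpow₂ : T ^ (ν₂ - 1) = T ^ ν₂ / T := by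
    rw [Real.rpow_sub hT, Real.rpow_one]
  have hpow₃ : T ^ (ν₃ - 1) = T ^ ν₃ / T := by
    rw [Real.rpow_sub hT, Real.rpow_one]
  have hkey : s ≤ γ₁*K₁*T^(ν₁-1) + γ₂*K₂*T^(ν₂-1) + γ₃*K₃*T^(ν₃-1) := by
    have hst : s * T ≤ (γ₁*K₁*T^(ν₁-1) + γ₂*K₂*T^(ν₂-1) + γ₃*K₃*T^(ν₃-1)) * T := by
      rw [hpow₁, hpow₂, hpow₃]
      have e : (γ₁*K₁*(T^ν₁/T) + γ₂*K₂*(T^ν₂/T) + γ₃*K₃*(T^ν₃/T)) * T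
          = γ₁*(K₁*T^ν₁) + γ₂*(K₂*T^ν₂) + γ₃*(K₃*T^ν₃) := by
        field_simp
      rw [e, hpoh]
      gcongr
    exact le_of_mul_le_mul_right hst hT
  set M := min (min ((s / (3 * γ₁ * K₁)) ^ (1 / (ν₁ - 1)))
                    ((s / (3 * γ₂ * K₂)) ^ (1 / (ν₂ - 1))))
               ((s / (3 * γ₃ * K₃)) ^ (1 / (ν₃ - 1))) with hM
  have hMT : M ≤ T := by
    have : s / 3 ≤ γ₁*K₁*T^(ν₁-1) ∨ s / 3 ≤ γ₂*K₂*T^(ν₂-1) ∨ s / 3 ≤ γ₃*K₃*T^(ν₃-1) := by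
      by_contra h
      push_neg at h
      obtain ⟨h1, h2, h3⟩ := h
      linarith
    rcases this with h | h | h
    · exact le_trans (le_trans (min_le_left _ _) (min_le_left _ _))
        (T_lower_bound s γ₁ K₁ ν₁ T hs0 hγ₁0 hK₁ hT hν₁' h)
    · exact le_trans (le_trans (min_le_left _ _) (min_le_right _ _))
        (T_lower_bound s γ₂ K₂ ν₂ T hs0 hγ₂0 hK₂ hT hν₂' h)
    · exact le_trans (min_le_right _ _)
        (T_lower_bound s γ₃ K₃ ν₃ T hs0 hγ₃0 hK₃ hT hν₃' h)
  have hMpos : 0 < M := by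
    apply lt_min (lt_min _ _) _ <;> exact Real.rpow_pos_of_pos (by positivity) _
  have hτpos : 0 < 1/2 - τ := by linarith
  constructor
  · have : (1/2 - τ) * M ≤ (1/2 - τ) * T := by
      exact mul_le_mul_of_nonneg_left hMT hτpos.le
    linarith
  · positivity
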